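/- For every sufficiently large s, setting k = lcm(2, 3, …, s+1) − 1 and n = 2^k, the number of distinct prime factors of τ(n) satisfies ω(τ(n)) ≥ s + O(1); in particular ω(τ(n)) ≥ (1/log 2 + o(1))·log log n along this sequence. -/

import Mathlib

open Filter

/-- `ω(m)` : number of distinct prime factors of an integer (`ω(0)=ω(±1)=0`). -/
def omegaZ (m : ℤ) : ℕ := m.natAbs.primeFactors.card

set_option maxHeartbeats 1000000 in
/-- For sufficiently large `s`, with `k = lcm(2,…,s+1) − 1` and `n = 2^k`, one has
`ω(τ(n)) ≥ s + O(1)`, and in particular `ω(τ(n)) ≥ (1/log 2 + o(1))·log log n`. -/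
theorem omega_tau_two_pow_lcm (τ : ℕ → ℤ)
    (hdvd : ∀ r s : ℕ, (r + 1) ∣ (s + 1) → τ (2 ^ r) ∣ τ (2 ^ s))
    (hprimitive : ∃ r₀ : ℕ, ∀ r : ℕ, r₀ ≤ r → ∃ q : ℕ, q.Prime ∧
      (q : ℤ) ∣ τ (2 ^ r) ∧ ∀ r' : ℕ, r' < r → ¬ (q : ℤ) ∣ τ (2 ^ r')) :
    (∃ C : ℝ, ∀ᶠ s : ℕ in atTop,
      (s : ℝ) ≤ (omegaZ (τ (2 ^ ((Finset.Icc 2 (s + 1)).lcm id - 1))) : ℝ) + C) ∧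
    (∀ ε : ℝ, 0 < ε → ∀ᶠ s : ℕ in atTop,
      (1 / Real.log 2 - ε) *
          Real.log (Real.log ((2 : ℝ) ^ ((Finset.Icc 2 (s + 1)).lcm id - 1 : ℕ))) ≤
        (omegaZ (τ (2 ^ ((Finset.Icc 2 (s + 1)).lcm id - 1))) : ℝ)) := by
  classical
  obtain ⟨r₀, hp⟩ := hprimitive
  have hp' : ∀ r : ℕ, ∃ q : ℕ, r₀ ≤ r → (q.Prime ∧
      (q : ℤ) ∣ τ (2 ^ r) ∧ ∀ r' : ℕ, r' < r → ¬ (q : ℤ) ∣ τ (2 ^ r')) := by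
    intro r
    by_cases h : r₀ ≤ r
    · obtain ⟨q, hq⟩ := hp r h
      exact ⟨q, fun _ => hq⟩
    · exact ⟨2, fun hc => absurd hc h⟩
  choose q hq using hp'
  -- τ(2^k) is never zero
  have hne : ∀ k : ℕ, τ (2 ^ k) ≠ 0 := by
    intro k h0
    have hcomm : (k + 1) * (r₀ + 1) = (r₀ + 1) * (k + 1) := Nat.mul_comm _ _
    have h1 : 1 ≤ (r₀ + 1) * (k + 1) := Nat.one_le_iff_ne_zero.2 (by positivity)
    have h3 : (r₀ + 1) * (k + 1) < (r₀ + 2) * (k + 1) :=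
      (Nat.mul_lt_mul_right (Nat.succ_pos k)).mpr (by omega)
    have h2 : r₀ + 2 ≤ (r₀ + 2) * (k + 1) := Nat.le_mul_of_pos_right _ (by omega)
    set r₁ := (r₀ + 1) * (k + 1) - 1 with hr₁
    set r₂ := (r₀ + 2) * (k + 1) - 1 with hr₂
    have hd : (k + 1) ∣ (r₁ + 1) := ⟨r₀ + 1, by omega⟩
    have ht1 : τ (2 ^ r₁) = 0 := by
      have := hdvd k r₁ hd
      rw [h0] at this
      exact zero_dvd_iff.mp this
    obtain ⟨hqp, hqd, hqn⟩ := hq r₂ (by omega)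
    exact hqn r₁ (by omega) (ht1 ▸ dvd_zero _)
  -- the counting lemma
  have hcount : ∀ (k : ℕ) (F : Finset ℕ),
      (∀ d ∈ F, d ∣ (k + 1) ∧ r₀ + 1 ≤ d) → F.card ≤ omegaZ (τ (2 ^ k)) := by
    intro k F hF
    have hmem : ∀ d ∈ F, q (d - 1) ∈ (τ (2 ^ k)).natAbs.primeFactors := by
      intro d hd
      obtain ⟨hdvd', hdr⟩ := hF d hd
      obtain ⟨hqp, hqd, hqn⟩ := hq (d - 1) (by omega)
      have hsucc : (d - 1) + 1 = d := by omega
      have hdk : τ (2 ^ (d - 1)) ∣ τ (2 ^ k) := hdvd (d - 1) k (by rw [hsucc]; exact hdvd')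
      refine Nat.mem_primeFactors.mpr ⟨hqp, ?_, ?_⟩
      · have h1 : (q (d - 1) : ℤ) ∣ τ (2 ^ k) := hqd.trans hdk
        have h2 := Int.natAbs_dvd_natAbs.mpr h1
        simpa using h2
      · simpa using hne k
    have hinj2 : ∀ d ∈ F, ∀ d' ∈ F, d < d' → q (d - 1) ≠ q (d' - 1) := by
      intro d hd d' hd' hlt heq
      obtain ⟨_, hdr⟩ := hF d hd
      obtain ⟨_, hdr'⟩ := hF d' hd'
      obtain ⟨_, hqd, _⟩ := hq (d - 1) (by omega)
      obtain ⟨_, _, hqn'⟩ := hq (d' - 1) (by omega)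
      exact hqn' (d - 1) (by omega) (heq ▸ hqd)
    have hinj : Set.InjOn (fun d => q (d - 1)) ↑F := by
      intro a ha b hb hab
      rcases lt_trichotomy a b with h | h | h
      · exact absurd hab (hinj2 a ha b hb h)
      · exact h
      · exact absurd hab.symm (hinj2 b hb a ha h)
    exact Finset.card_le_card_of_injOn _ hmem hinj
  -- basic facts about L
  have hLpos : ∀ s : ℕ, 0 < (Finset.Icc 2 (s + 1)).lcm id := by
    intro s
    rcases Nat.eq_zero_or_pos ((Finset.Icc 2 (s + 1)).lcm id) with h | h
    · exfalso
      obtain ⟨d, hd, hd0⟩ := Finset.lcm_eq_zero_iff.mp h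
      rw [Finset.mem_Icc] at hd
      simp only [id] at hd0
      omega
    · exact h
  have hdvdL : ∀ s d : ℕ, 1 ≤ d → d ≤ s + 1 → d ∣ (Finset.Icc 2 (s + 1)).lcm id := by
    intro s d h1 h2
    rcases Nat.lt_or_ge d 2 with h | h
    · have : d = 1 := by omega
      rw [this]; exact one_dvd _
    · exact Finset.dvd_lcm (Finset.mem_Icc.mpr ⟨h, h2⟩)
  constructor
  · -- Part 1 : C = r₀
    refine ⟨(r₀ : ℝ), ?_⟩
    filter_upwards [eventually_ge_atTop r₀] with s hs
    set L := (Finset.Icc 2 (s + 1)).lcm id with hLdef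
    have hL1 : 1 ≤ L := hLpos s
    have hF : ∀ d ∈ Finset.Icc (r₀ + 1) (s + 1), d ∣ (L - 1 + 1) ∧ r₀ + 1 ≤ d := by
      intro d hd
      rw [Finset.mem_Icc] at hd
      have : L - 1 + 1 = L := by omega
      rw [this]
      exact ⟨hdvdL s d (by omega) hd.2, hd.1⟩
    have hcard := hcount (L - 1) (Finset.Icc (r₀ + 1) (s + 1)) hF
    rw [Nat.card_Icc] at hcard
    have hnat : s ≤ omegaZ (τ (2 ^ (L - 1))) + r₀ := by omega
    exact_mod_cast hnat
  · -- Part 2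
    intro ε hε
    have hlogev : ∀ᶠ s : ℕ in atTop, (100 : ℝ) ≤ Real.log ((s : ℝ) + 1) := by
      filter_upwards [eventually_ge_atTop ⌈Real.exp 100⌉₊] with s hs
      have h1 : Real.exp 100 ≤ (s : ℝ) + 1 := by
        calc Real.exp 100 ≤ (⌈Real.exp 100⌉₊ : ℝ) := Nat.le_ceil _
        _ ≤ (s : ℝ) := by exact_mod_cast hs
        _ ≤ (s : ℝ) + 1 := by linarith
      calc (100 : ℝ) = Real.log (Real.exp 100) := (Real.log_exp _).symm
      _ ≤ Real.log ((s : ℝ) + 1) := Real.log_le_log (Real.exp_pos _) h1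
    filter_upwards [hlogev, eventually_ge_atTop (56 * (r₀ + 7)), eventually_ge_atTop 2]
      with s hlog hs56 hs2
    set L := (Finset.Icc 2 (s + 1)).lcm id with hLdef
    have hL1 : 1 ≤ L := hLpos s
    have hLs : s + 1 ≤ L := Nat.le_of_dvd (hLpos s) (hdvdL s (s + 1) (by omega) le_rfl)
    set m := Nat.log 3 (s + 1) with hm
    set T := s / 7 with hT
    have h3m : 3 ^ m ≤ s + 1 := Nat.pow_log_le_self 3 (by omega)
    have hs1lt : s + 1 < 3 ^ (m + 1) := Nat.lt_pow_succ_log_self (by norm_num) _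
    have h7a : 7 * T ≤ s ∧ s < 7 * T + 7 := by
      have h := Nat.div_add_mod s 7
      have h2 : s % 7 < 7 := Nat.mod_lt _ (by norm_num)
      omega
    have h7b : 8 * (r₀ + 7) ≤ T := by
      rw [hT]
      rw [Nat.le_div_iff_mul_le (by norm_num : 0 < 7)]
      omega
    -- the counting family
    set D := (Finset.range (m + 1)) ×ˢ (Finset.range (m + 1)) ×ˢ (Finset.Icc r₀ T)
      with hD
    set f : ℕ × ℕ × ℕ → ℕ := fun p => 2 ^ p.1 * 3 ^ p.2.1 * (6 * p.2.2 + 5) with hf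
    -- factorization facts for injectivity
    have key2 : ∀ a b t : ℕ, (2 ^ a * 3 ^ b * (6 * t + 5)).factorization 2 = a := by
      intro a b t
      have h1 : ¬ (2 ∣ 3 ^ b * (6 * t + 5)) := by
        intro h
        rcases (Nat.Prime.dvd_mul Nat.prime_two).mp h with h | h
        · exact absurd (Nat.Prime.dvd_of_dvd_pow Nat.prime_two h) (by norm_num)
        · omega
      have hu : (3 ^ b * (6 * t + 5)).factorization 2 = 0 :=
        Nat.factorization_eq_zero_of_not_dvd h1
      rw [mul_assoc, Nat.factorization_mul (by positivity) (by positivity),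
        Finsupp.add_apply, hu, Nat.Prime.factorization_pow Nat.prime_two]
      simp
    have key3 : ∀ a b t : ℕ, (2 ^ a * 3 ^ b * (6 * t + 5)).factorization 3 = b := by
      intro a b t
      have hre : 2 ^ a * 3 ^ b * (6 * t + 5) = 3 ^ b * (2 ^ a * (6 * t + 5)) := by ring
      have h1 : ¬ (3 ∣ 2 ^ a * (6 * t + 5)) := by
        intro h
        rcases (Nat.Prime.dvd_mul Nat.prime_three).mp h with h | h
        · exact absurd (Nat.Prime.dvd_of_dvd_pow Nat.prime_three h) (by norm_num)
        · omega
      have hu : (2 ^ a * (6 * t + 5)).factorization 3 = 0 :=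
        Nat.factorization_eq_zero_of_not_dvd h1
      rw [hre, Nat.factorization_mul (by positivity) (by positivity),
        Finsupp.add_apply, hu, Nat.Prime.factorization_pow Nat.prime_three]
      simp
    have hinjf : Set.InjOn f ↑D := by
      rintro ⟨a, b, t⟩ _ ⟨a', b', t'⟩ _ heq
      simp only [hf] at heq
      have ha : a = a' := by
        have h1 := key2 a b t
        have h2 := key2 a' b' t'
        rw [heq] at h1
        omega
      have hb : b = b' := by
        have h1 := key3 a b t
        have h2 := key3 a' b' t'
        rw [heq] at h1
        omega
      subst ha; subst hb
      have hpos : 0 < 2 ^ a * 3 ^ b := by positivity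
      have ht : (6 : ℕ) * t + 5 = 6 * t' + 5 := Nat.eq_of_mul_eq_mul_left hpos heq
      have : t = t' := by omega
      simp [this]
    -- each f p satisfies the hypotheses of hcount
    have hFprop : ∀ d ∈ D.image f, d ∣ (L - 1 + 1) ∧ r₀ + 1 ≤ d := by
      intro d hd
      obtain ⟨⟨a, b, t⟩, hpD, rfl⟩ := Finset.mem_image.mp hd
      simp only [hD, Finset.mem_product, Finset.mem_range, Finset.mem_Icc] at hpD
      obtain ⟨ha, hb, ht1, ht2⟩ := hpD
      have hLe : L - 1 + 1 = L := by omega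
      rw [hLe]
      have h2a : 2 ^ a ≤ s + 1 := le_trans (Nat.pow_le_pow_left (by norm_num) a)
        (le_trans (Nat.pow_le_pow_right (by norm_num) (by omega)) h3m)
      have h3b : 3 ^ b ≤ s + 1 := le_trans (Nat.pow_le_pow_right (by norm_num) (by omega)) h3m
      have hj : 6 * t + 5 ≤ s + 1 := by omega
      have hd2 : (2 ^ a : ℕ) ∣ L := hdvdL s _ (Nat.one_le_two_pow) h2a
      have hd3 : (3 ^ b : ℕ) ∣ L := hdvdL s _ (Nat.one_le_pow _ _ (by norm_num)) h3b
      have hdj : (6 * t + 5 : ℕ) ∣ L := hdvdL s _ (by omega) hj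
      have cop23 : Nat.Coprime (2 ^ a) (3 ^ b) := Nat.Coprime.pow _ _ (by decide)
      have cop2j : Nat.Coprime (2 ^ a) (6 * t + 5) :=
        Nat.Coprime.pow_left _ ((Nat.Prime.coprime_iff_not_dvd Nat.prime_two).mpr (by omega))
      have cop3j : Nat.Coprime (3 ^ b) (6 * t + 5) :=
        Nat.Coprime.pow_left _ ((Nat.Prime.coprime_iff_not_dvd Nat.prime_three).mpr (by omega))
      constructor
      · exact Nat.Coprime.mul_dvd_of_dvd_of_dvd (Nat.Coprime.mul cop2j cop3j)
          (Nat.Coprime.mul_dvd_of_dvd_of_dvd cop23 hd2 hd3) hdj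
      · have : 6 * t + 5 ≤ 2 ^ a * 3 ^ b * (6 * t + 5) :=
          Nat.le_mul_of_pos_left _ (by positivity)
        simp only [hf]
        omega
    have hcard : (D.image f).card = (m + 1) * ((m + 1) * (T + 1 - r₀)) := by
      rw [Finset.card_image_of_injOn hinjf]
      simp [hD, Nat.card_Icc]
    have hω : (m + 1) * ((m + 1) * (T + 1 - r₀)) ≤ omegaZ (τ (2 ^ (L - 1))) := by
      rw [← hcard]
      exact hcount (L - 1) (D.image f) hFprop
    -- now the real-number estimates
    have hk2 : 2 ≤ L - 1 := by omega
    set P := Real.log ((s : ℝ) + 1) with hP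
    have hP0 : (0 : ℝ) ≤ P := by linarith
    have hlog2pos : (0 : ℝ) < Real.log 2 := by
      have := Real.log_two_gt_d9; linarith
    -- X = log log (2^(L-1))
    have hXeq : Real.log ((2 : ℝ) ^ (L - 1 : ℕ)) = ((L - 1 : ℕ) : ℝ) * Real.log 2 :=
      Real.log_pow _ _
    set X := Real.log (Real.log ((2 : ℝ) ^ (L - 1 : ℕ))) with hX
    have hkcast : (2 : ℝ) ≤ ((L - 1 : ℕ) : ℝ) := by exact_mod_cast hk2
    have hX0 : (0 : ℝ) ≤ X := by
      rw [hX, hXeq]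
      apply Real.log_nonneg
      nlinarith [Real.log_two_gt_d9]
    -- upper bound : X ≤ s * P
    have hLprod : L ≤ (s + 1) ^ s := by
      have h1 : L ∣ ∏ i ∈ Finset.Icc 2 (s + 1), i :=
        Finset.lcm_dvd (fun b hb => Finset.dvd_prod_of_mem _ hb)
      have h2 : ∏ i ∈ Finset.Icc 2 (s + 1), i ≤ (s + 1) ^ (Finset.Icc 2 (s + 1)).card :=
        Finset.prod_le_pow_card _ _ _ (fun x hx => (Finset.mem_Icc.mp hx).2)
      have h3 : (Finset.Icc 2 (s + 1)).card = s := by rw [Nat.card_Icc]; omega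
      rw [h3] at h2
      refine le_trans (Nat.le_of_dvd ?_ h1) h2
      exact Finset.prod_pos fun i hi => by have := (Finset.mem_Icc.mp hi).1; omega
    have hXle : X ≤ (s : ℝ) * P := by
      rw [hX, hXeq]
      have h1 : ((L - 1 : ℕ) : ℝ) * Real.log 2 ≤ (L : ℝ) := by
        have hlt : Real.log 2 < 1 := by
          have := Real.log_two_lt_d9; linarith
        have hLL : ((L - 1 : ℕ) : ℝ) ≤ (L : ℝ) := by exact_mod_cast Nat.sub_le L 1
        nlinarith
      have h2 : (L : ℝ) ≤ ((s : ℝ) + 1) ^ s := by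
        have := hLprod
        have : (L : ℝ) ≤ (((s + 1) ^ s : ℕ) : ℝ) := by exact_mod_cast this
        push_cast at this
        exact this
      calc Real.log (((L - 1 : ℕ) : ℝ) * Real.log 2)
          ≤ Real.log (((s : ℝ) + 1) ^ s) := by
            apply Real.log_le_log
            · nlinarith [Real.log_two_gt_d9]
            · linarith
        _ = (s : ℝ) * P := by rw [Real.log_pow]
    -- coefficient bound
    have hcoef : 1 / Real.log 2 - ε ≤ 2 := by
      have h1 : (1 : ℝ) / Real.log 2 ≤ 2 := by
        rw [div_le_iff₀ hlog2pos]
        nlinarith [Real.log_two_gt_d9]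
      linarith
    -- counting lower bound in ℝ
    have hmP : P ≤ ((m : ℝ) + 1) * (7 / 5 : ℝ) := by
      have h1 : P ≤ ((m : ℝ) + 1) * Real.log 3 := by
        have hc : ((s : ℝ) + 1) ≤ (3 : ℝ) ^ (m + 1) := by
          have : ((s + 1 : ℕ) : ℝ) ≤ ((3 ^ (m + 1) : ℕ) : ℝ) := by
            exact_mod_cast hs1lt.le
          push_cast at this
          exact this
        calc P ≤ Real.log ((3 : ℝ) ^ (m + 1)) := Real.log_le_log (by positivity) hc
          _ = ((m : ℝ) + 1) * Real.log 3 := by rw [Real.log_pow]; push_cast; ring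
      have h2 : Real.log 3 ≤ (7 / 5 : ℝ) := by
        have h3 : Real.log 3 ≤ Real.log 4 := Real.log_le_log (by norm_num) (by norm_num)
        have h4 : Real.log 4 = 2 * Real.log 2 := by
          rw [show (4 : ℝ) = 2 ^ 2 by norm_num, Real.log_pow]; push_cast; ring
        rw [h4] at h3
        have := Real.log_two_lt_d9
        linarith
      have hm0 : (0 : ℝ) ≤ (m : ℝ) + 1 := by positivity
      have := mul_le_mul_of_nonneg_left h2 hm0
      linarith
    have hcnat : s ≤ 8 * (T + 1 - r₀) := by omega
    have hcR : (s : ℝ) / 8 ≤ ((T + 1 - r₀ : ℕ) : ℝ) := by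
      have : (s : ℝ) ≤ 8 * ((T + 1 - r₀ : ℕ) : ℝ) := by exact_mod_cast hcnat
      linarith
    have habs : ∀ P' A' C' S : ℝ, 0 ≤ A' → 0 ≤ C' → 0 ≤ S → 100 ≤ P' →
        P' ≤ A' * (7 / 5) → S ≤ 8 * C' → 2 * (S * P') ≤ A' * (A' * C') := by
      intro P' A' C' S hA0 hC0 hS0 hP100 hPA hSC
      have hP0' : (0 : ℝ) ≤ P' := by linarith
      have h1 : (62 : ℝ) * (S * P') ≤ P' * (P' * S) := by
        nlinarith [mul_le_mul_of_nonneg_right hP100 (mul_nonneg hP0' hS0)]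
      have hinner : P' * S ≤ A' * (7 / 5) * (8 * C') :=
        mul_le_mul hPA hSC hS0 (by nlinarith)
      have h2 : P' * (P' * S) ≤ A' * (7 / 5) * (A' * (7 / 5) * (8 * C')) :=
        mul_le_mul hPA hinner (mul_nonneg hP0' hS0) (by nlinarith)
      have h3 : A' * (7 / 5) * (A' * (7 / 5) * (8 * C')) ≤ 16 * (A' * (A' * C')) := by
        nlinarith [mul_nonneg (mul_nonneg hA0 hA0) hC0]
      have hAAC : (0 : ℝ) ≤ A' * (A' * C') := mul_nonneg hA0 (mul_nonneg hA0 hC0)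
      linarith only [h1, h2, h3, hAAC]
    have hωR : 2 * ((s : ℝ) * P) ≤ (((m + 1) * ((m + 1) * (T + 1 - r₀)) : ℕ) : ℝ) := by
      push_cast
      refine le_trans (habs P ((m : ℝ) + 1) (((T + 1 - r₀ : ℕ)) : ℝ) (s : ℝ)
        (by positivity) (Nat.cast_nonneg _) (Nat.cast_nonneg _) hlog hmP ?_) ?_
      · linarith [hcR]
      · exact le_refl _
    -- conclusion
    have hfinal : (((m + 1) * ((m + 1) * (T + 1 - r₀)) : ℕ) : ℝ)
        ≤ (omegaZ (τ (2 ^ (L - 1))) : ℝ) := by exact_mod_cast hω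
    have hcstep : (1 / Real.log 2 - ε) * X ≤ 2 * X := by
      have := mul_le_mul_of_nonneg_right hcoef hX0
      linarith
    calc (1 / Real.log 2 - ε) * X ≤ 2 * X := hcstep
      _ ≤ 2 * ((s : ℝ) * P) := by linarith
      _ ≤ (omegaZ (τ (2 ^ (L - 1))) : ℝ) := le_trans hωR hfinal
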